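/- Let (g_n), (β_n) be nonnegative real sequences, (h_n), (γ_n) positive with 0 < h_n γ_n < 1, and suppose g_{n+1} ≤ g_n(1 - h_n γ_n) + h_n α(n, g_n) + h_n β_n for all n ≥ 0, where α(n,y) ≥ 0 is nondecreasing in y. If there is a positive sequence (μ_n) with α(n, 1/μ_n) + β_n ≤ (1/μ_n)(γ_n - (μ_{n+1} - μ_n)/(μ_n h_n)) for all n and g_0 ≤ 1/μ_0, then 0 ≤ g_n ≤ 1/μ_n for all n ≥ 0. -/

import Mathlib

/-- Theorem 3 (discrete inequality): `g_{n+1} ≤ g_n(1 - h_n γ_n) + h_n α(n, g_n) + h_n β_n`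
with the discrete comparison condition implies `0 ≤ g_n ≤ 1/μ_n` for all `n`. -/
theorem stmt6
    (g β h γ μ : ℕ → ℝ) (α : ℕ → ℝ → ℝ)
    (hgnonneg : ∀ n, 0 ≤ g n)
    (hβnonneg : ∀ n, 0 ≤ β n)
    (hh : ∀ n, 0 < h n)
    (hhγ : ∀ n, 0 < h n * γ n ∧ h n * γ n < 1)
    (hαnonneg : ∀ n, ∀ y, 0 ≤ y → 0 ≤ α n y)
    (hαmono : ∀ n, ∀ y z, 0 ≤ y → y ≤ z → α n y ≤ α n z)
    (hineq : ∀ n, g (n + 1) ≤ g n * (1 - h n * γ n) + h n * α n (g n) + h n * β n)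
    (hμpos : ∀ n, 0 < μ n)
    (hcomp : ∀ n, α n (1 / μ n) + β n ≤ (1 / μ n) * (γ n - (μ (n + 1) - μ n) / (μ n * h n)))
    (hinit : g 0 ≤ 1 / μ 0) :
    ∀ n, 0 ≤ g n ∧ g n ≤ 1 / μ n := by
  intro n
  induction n with
  | zero => exact ⟨hgnonneg 0, hinit⟩
  | succ n ih =>
    refine ⟨hgnonneg _, ?_⟩
    have hμn := hμpos n
    have hμn' := hμpos (n + 1)
    have hhn := hh n
    have h1 : (0:ℝ) ≤ 1 - h n * γ n := by linarith [(hhγ n).2]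
    have h2 : g n * (1 - h n * γ n) ≤ (1 / μ n) * (1 - h n * γ n) :=
      mul_le_mul_of_nonneg_right ih.2 h1
    have h3 : α n (g n) ≤ α n (1 / μ n) := hαmono n _ _ (hgnonneg n) ih.2
    have h4 : g (n + 1) ≤ (1 / μ n) * (1 - h n * γ n)
        + h n * (α n (1 / μ n) + β n) := by
      have := hineq n
      nlinarith
    have h5 : (1 / μ n) * (1 - h n * γ n)
        + h n * ((1 / μ n) * (γ n - (μ (n + 1) - μ n) / (μ n * h n))) ≤ 1 / μ (n + 1) := by
      have hne : μ n * h n ≠ 0 := by positivity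
      field_simp
      nlinarith [sq_nonneg (μ n - μ (n + 1)), mul_pos hμn hhn, sq_nonneg (μ n * h n)]
    have h6 : h n * (α n (1 / μ n) + β n)
        ≤ h n * ((1 / μ n) * (γ n - (μ (n + 1) - μ n) / (μ n * h n))) :=
      mul_le_mul_of_nonneg_left (hcomp n) hhn.le
    linarith
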